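/- Let G be a directed graph with inconsistent edges E^i and let C, C' be source-equivalence classes with C' ∈ coupled⁺(C). Then there exists an edge R ∈ C such that for every S ∈ C', S ∈ coupled⁺(R), i.e., there exists an undirected path P from v_R to u_S with P ∩ u_R^{+,R} = ∅. -/

import Mathlib

namespace CQA

variable {V : Type*}

/-- Directed reachability along edges in `A`. -/
def reach (A : Set (V × V)) (u v : V) : Prop :=
  Relation.ReflTransGen (fun x y => (x, y) ∈ A) u v

/-- `u` and `v` are in the same strongly connected component of the graph with edges `E`. -/
def sameSCC (E : Set (V × V)) (u v : V) : Prop := reach E u v ∧ reach E v u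

/-- There is an undirected path in `E` from `a` to `b` all of whose vertices
(including the endpoints) avoid the set `A`. -/
def ureach (E : Set (V × V)) (A : Set V) (a b : V) : Prop :=
  a ∉ A ∧ Relation.ReflTransGen (fun x y => ((x, y) ∈ E ∨ (y, x) ∈ E) ∧ y ∉ A) a b

/-- `u_R^{+,R}`: vertices reachable from the source of `R` in `G − {R}`. -/
def uplus (E : Set (V × V)) (R : V × V) : Set V := {v | reach (E \ {R}) R.1 v}

/-- `u^⊕`: vertices reachable from `u` using only consistent edges `Ec`. -/
def uoplus (Ec : Set (V × V)) (u : V) : Set V := {v | reach Ec u v}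

/-- `C` is a source-equivalence class of inconsistent edges `Ei`. -/
def IsClass (E Ei : Set (V × V)) (C : Set (V × V)) : Prop :=
  ∃ R ∈ Ei, C = {S ∈ Ei | sameSCC E R.1 S.1}

/-- `C^⊕ = ⋂_{R ∈ C} u_R^⊕`. -/
def Coplus (Ec : Set (V × V)) (C : Set (V × V)) : Set V :=
  {v | ∀ R ∈ C, v ∈ uoplus Ec R.1}

/-- `C⁺ = ⋂_{R ∈ C} u_R^{+,R}`. -/
def Cplus (E : Set (V × V)) (C : Set (V × V)) : Set V :=
  {v | ∀ R ∈ C, v ∈ uplus E R}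

/-- `C₁ ≤⊕ C₂` iff some `S ∈ C₂` has `u_S ∈ C₁^⊕`. -/
def leOplus (Ec : Set (V × V)) (C₁ C₂ : Set (V × V)) : Prop :=
  ∃ S ∈ C₂, S.1 ∈ Coplus Ec C₁

/-- The strict order `C₁ <⊕ C₂`. -/
def ltOplus (Ec : Set (V × V)) (C₁ C₂ : Set (V × V)) : Prop :=
  leOplus Ec C₁ C₂ ∧ C₁ ≠ C₂

/-- A sink: a maximal element of `<⊕` among source-equivalence classes. -/
def IsSink (E Ei Ec : Set (V × V)) (C : Set (V × V)) : Prop :=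
  IsClass E Ei C ∧ ∀ C', IsClass E Ei C' → ¬ ltOplus Ec C C'

/-- `C' ∈ coupled⊕(C)`. -/
def coupledOplusCl (E Ec : Set (V × V)) (C C' : Set (V × V)) : Prop :=
  C' = C ∨ ∃ R ∈ C, ∃ S ∈ C', ureach E (Coplus Ec C) R.2 S.1

/-- `C' ∈ coupled⁺(C)`. -/
def coupledPlusCl (E : Set (V × V)) (C C' : Set (V × V)) : Prop :=
  C' = C ∨ ∃ R ∈ C, ∃ S ∈ C', ureach E (Cplus E C) R.2 S.1

/-- `S ∈ coupled⁺(R)` for inconsistent edges `R, S`: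
either `S ∈ [R]`, or there is an undirected path `v_R ↔ u_S` avoiding `u_R^{+,R}`. -/
def coupledPlusEdge (E Ei : Set (V × V)) (R S : V × V) : Prop :=
  S ∈ Ei ∧ (sameSCC E R.1 S.1 ∨ ureach E (uplus E R) R.2 S.1)

/-- `G` is splittable: every coupled pair of inconsistent edges is source-equivalent. -/
def Splittable (E Ec : Set (V × V)) : Prop :=
  ∀ R ∈ E \ Ec, ∀ S ∈ E \ Ec,
    coupledPlusEdge E (E \ Ec) R S → coupledPlusEdge E (E \ Ec) S R → sameSCC E R.1 S.1

/-- `G` is f-closed: for every inconsistent edge `R`,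
`v_R^⊕ ∩ u_R^{+,R} ⊆ u_R^⊕`. -/
def FClosed (E Ec : Set (V × V)) : Prop :=
  ∀ R ∈ E \ Ec, ∀ v, v ∈ uoplus Ec R.2 → v ∈ uplus E R → v ∈ uoplus Ec R.1

end CQA

namespace CQAProof
open CQA Relation

variable {V : Type*}

/-- Step relation of undirected walks avoiding `W`. -/
abbrev gstep (E : Set (V × V)) (W : Set V) (x y : V) : Prop :=
  ((x, y) ∈ E ∨ (y, x) ∈ E) ∧ y ∉ W

lemma reach_mono {A B : Set (V × V)} (h : A ⊆ B) {u v : V} (hr : reach A u v) :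
    reach B u v := ReflTransGen.mono (fun _ _ hxy => h hxy) u v hr

lemma uplus_reach {E : Set (V × V)} {R : V × V} {z : V} (h : z ∈ uplus E R) :
    reach E R.1 z := reach_mono Set.diff_subset h

lemma lemF {E : Set (V × V)} {W : Set V} {a b : V}
    (h : ReflTransGen (gstep E W) a b) (ha : a ∉ W) : b ∉ W := by
  induction h with
  | refl => exact ha
  | tail _ h2 _ => exact h2.2

/-- Lemma A: if `x` is reachable from `u_R` in `E` but not avoiding `R`, then there is a
directed walk from `v_R` to `x` avoiding `u_R^{+,R}` pointwise. -/
lemma lemA {E : Set (V × V)} {R : V × V} (hR : R ∈ E) {x : V}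
    (hr : reach E R.1 x) (hx : x ∉ uplus E R) :
    R.2 ∉ uplus E R ∧ ReflTransGen (gstep E (uplus E R)) R.2 x := by
  induction hr with
  | refl => exact absurd ReflTransGen.refl hx
  | @tail y z h1 h2 ih =>
    by_cases hy : y ∈ uplus E R
    · by_cases he : (y, z) = R
      · subst he
        exact ⟨hx, ReflTransGen.refl⟩
      · exact absurd (ReflTransGen.tail hy ⟨h2, by simpa using he⟩) hx
    · obtain ⟨h3, h4⟩ := ih hy
      exact ⟨h3, h4.tail ⟨Or.inl h2, hx⟩⟩

/-- Lemma D: if `u_R` is not in the SCC of `s`, then any path from a vertex of the SCC of `s`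
back to `s` can be chosen avoiding the edge `R`. -/
lemma lemD {E : Set (V × V)} {R : V × V} {s : V} (hs : ¬ sameSCC E R.1 s) :
    ∀ z, reach E z s → reach E s z → reach (E \ {R}) z s := by
  intro z h1
  induction h1 using ReflTransGen.head_induction_on with
  | refl => exact fun _ => ReflTransGen.refl
  | @head a c h' hrest ih =>
    intro hsa
    have hsc : reach E s c := hsa.tail h'
    have hac : (a, c) ∈ E \ {R} := by
      refine ⟨h', ?_⟩
      simp only [Set.mem_singleton_iff]
      intro heq
      apply hs
      have ha1 : a = R.1 := by rw [← heq]
      subst ha1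
      exact ⟨ReflTransGen.head h' hrest, hsa⟩
    exact ReflTransGen.head hac (ih hsc)

/-- Lemma C: extension within the SCC of `s`, avoiding `u_R^{+,R}`. -/
lemma lemC {E : Set (V × V)} {R : V × V} {s : V} (hs : ¬ sameSCC E R.1 s)
    (hsW : s ∉ uplus E R) {z : V} (h1 : reach E s z) (h2 : reach E z s) :
    z ∉ uplus E R ∧ ReflTransGen (gstep E (uplus E R)) s z := by
  induction h1 with
  | refl => exact ⟨hsW, ReflTransGen.refl⟩
  | @tail y z h1' h2' ih =>
    have hys : reach E y s := ReflTransGen.head h2' h2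
    obtain ⟨hyW, hchain⟩ := ih hys
    have hzW : z ∉ uplus E R := by
      intro hzW
      exact hsW (ReflTransGen.trans hzW (lemD hs z h2 (h1'.tail h2')))
    exact ⟨hzW, hchain.tail ⟨Or.inl h2', hzW⟩⟩

/-- Lemma E: a `W₁`-avoiding walk either avoids `W₂` too, or contains a vertex of `W₂`. -/
lemma lemE {E : Set (V × V)} {W₁ W₂ : Set V} {b : V} :
    ∀ {x}, ReflTransGen (gstep E W₁) x b → x ∉ W₁ →
      (x ∉ W₂ ∧ ReflTransGen (gstep E W₂) x b) ∨
        ∃ z, z ∈ W₂ ∧ z ∉ W₁ ∧ ReflTransGen (gstep E W₁) z b := by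
  intro x h
  induction h using ReflTransGen.head_induction_on with
  | refl =>
    intro hb
    by_cases hb2 : b ∈ W₂
    · exact Or.inr ⟨b, hb2, hb, ReflTransGen.refl⟩
    · exact Or.inl ⟨hb2, ReflTransGen.refl⟩
  | @head a c h' hrest ih =>
    intro haW₁
    rcases ih h'.2 with ⟨hcW₂, hch⟩ | hr
    · by_cases haW₂ : a ∈ W₂
      · exact Or.inr ⟨a, haW₂, haW₁, ReflTransGen.head h' hrest⟩
      · exact Or.inl ⟨haW₂, ReflTransGen.head ⟨h'.1, hcW₂⟩ hch⟩
    · exact Or.inr hr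

/-- The main induction: along an undirected walk avoiding `C⁺`, find a single edge `T ∈ C`
and a vertex `z` from which a `u_T^{+,T}`-avoiding suffix reaches `s`. -/
lemma claim {E C : Set (V × V)} (hSCC : ∀ T₁ ∈ C, ∀ T₂ ∈ C, reach E T₁.1 T₂.1) {s : V} :
    ∀ {x}, ReflTransGen (gstep E (Cplus E C)) x s → x ∉ Cplus E C →
      (∃ T ∈ C, ∃ z, reach E T.1 z ∧ z ∉ uplus E T ∧
          ReflTransGen (gstep E (uplus E T)) z s) ∨
        (∃ T ∈ C, x ∉ uplus E T ∧ ReflTransGen (gstep E (uplus E T)) x s) := by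
  intro x h
  induction h using ReflTransGen.head_induction_on with
  | refl =>
    intro hsC
    obtain ⟨T, hT, hsT⟩ : ∃ T ∈ C, s ∉ uplus E T := by
      by_contra hcon
      push_neg at hcon
      exact hsC (fun T hT => hcon T hT)
    exact Or.inr ⟨T, hT, hsT, ReflTransGen.refl⟩
  | @head a c h' hrest ih =>
    intro haC
    rcases ih h'.2 with hA | ⟨T, hT, hcT, hch⟩
    · exact Or.inl hA
    · by_cases haT : a ∈ uplus E T
      · rcases h'.1 with hf | hb
        · exact Or.inl ⟨T, hT, c, (uplus_reach haT).tail hf, hcT, hch⟩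
        · obtain ⟨T', hT', haT'⟩ : ∃ T' ∈ C, a ∉ uplus E T' := by
            by_contra hcon
            push_neg at hcon
            exact haC (fun T hT => hcon T hT)
          rcases lemE (W₂ := uplus E T') hch hcT with ⟨hcT', hch'⟩ | ⟨z, hzT', hzT, hchz⟩
          · exact Or.inr ⟨T', hT', haT', ReflTransGen.head ⟨Or.inr hb, hcT'⟩ hch'⟩
          · exact Or.inl ⟨T, hT, z,
              (hSCC T hT T' hT').trans (uplus_reach hzT'), hzT, hchz⟩
      · exact Or.inr ⟨T, hT, haT, ReflTransGen.head ⟨h'.1, hcT⟩ hch⟩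

end CQAProof

open CQA in
/-- if C' ∈ coupled⁺(C), there exists R ∈ C with S ∈ coupled⁺(R)
for every S ∈ C'. -/
theorem stmt_9 {V : Type*} [Fintype V] (E Ec : Set (V × V)) (hEc : Ec ⊆ E)
    (C C' : Set (V × V)) (hC : IsClass E (E \ Ec) C) (hC' : IsClass E (E \ Ec) C')
    (h : coupledPlusCl E C C') :
    ∃ R ∈ C, ∀ S ∈ C', coupledPlusEdge E (E \ Ec) R S := by
  classical
  open CQAProof Relation in
  obtain ⟨r, hrEi, hCdef⟩ := hC
  obtain ⟨r', hr'Ei, hC'def⟩ := hC'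
  have hmemC : ∀ T, T ∈ C ↔ T ∈ E \ Ec ∧ sameSCC E r.1 T.1 := by
    intro T; rw [hCdef]; exact Iff.rfl
  have hmemC' : ∀ T, T ∈ C' ↔ T ∈ E \ Ec ∧ sameSCC E r'.1 T.1 := by
    intro T; rw [hC'def]; exact Iff.rfl
  by_cases hcc : C' = C
  · refine ⟨r, ?_, ?_⟩
    · exact (hmemC r).2 ⟨hrEi, ReflTransGen.refl, ReflTransGen.refl⟩
    · intro S hS
      rw [hcc] at hS
      obtain ⟨hSEi, hSscc⟩ := (hmemC S).1 hS
      exact ⟨hSEi, Or.inl hSscc⟩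
  · rcases h with hcc' | ⟨R, hR, S₀, hS₀, hU⟩
    · exact absurd hcc' hcc
    have hSCC : ∀ T₁ ∈ C, ∀ T₂ ∈ C, reach E T₁.1 T₂.1 := by
      intro T₁ h1 T₂ h2
      exact (((hmemC T₁).1 h1).2.2).trans (((hmemC T₂).1 h2).2.1)
    have hclaim := claim hSCC hU.2 hU.1
    obtain ⟨T, hT, z, hrz, hzT, hch⟩ :
        ∃ T ∈ C, ∃ z, reach E T.1 z ∧ z ∉ uplus E T ∧
          ReflTransGen (gstep E (uplus E T)) z S₀.1 := by
      rcases hclaim with hA | ⟨T, hT, hxT, hch⟩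
      · exact hA
      · refine ⟨T, hT, R.2, ?_, hxT, hch⟩
        have h1 : reach E T.1 R.1 := hSCC T hT R hR
        have h2 : (R.1, R.2) ∈ E := by
          have := (((hmemC R).1 hR).1).1
          simpa using this
        exact h1.tail h2
    have hTE : T ∈ E := (((hmemC T).1 hT).1).1
    have hA := lemA hTE hrz hzT
    have hS₀W : S₀.1 ∉ uplus E T := lemF hch hzT
    have hS₀C' := (hmemC' S₀).1 hS₀
    have hs : ¬ sameSCC E T.1 S₀.1 := by
      intro hsc
      apply hcc
      have hTC : sameSCC E r.1 T.1 := ((hmemC T).1 hT).2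
      have hrr' : sameSCC E r'.1 r.1 :=
        ⟨(hS₀C'.2.1.trans hsc.2).trans hTC.2, hTC.1.trans (hsc.1.trans hS₀C'.2.2)⟩
      ext S
      rw [hmemC, hmemC']
      constructor
      · rintro ⟨h1, h2⟩
        exact ⟨h1, ⟨hrr'.2.trans h2.1, h2.2.trans hrr'.1⟩⟩
      · rintro ⟨h1, h2⟩
        exact ⟨h1, ⟨hrr'.1.trans h2.1, h2.2.trans hrr'.2⟩⟩
    refine ⟨T, hT, ?_⟩
    intro S hS
    obtain ⟨hSEi, hSscc⟩ := (hmemC' S).1 hS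
    refine ⟨hSEi, Or.inr ?_⟩
    have hscc' : sameSCC E S₀.1 S.1 :=
      ⟨hS₀C'.2.2.trans hSscc.1, hSscc.2.trans hS₀C'.2.1⟩
    have hCex := lemC hs hS₀W hscc'.1 hscc'.2
    exact ⟨hA.1, (hA.2.trans hch).trans hCex.2⟩
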